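/- Let K₂ be a sub-probability distribution on ℕ with total mass L₂(∞) = e^{−λ₀} < 1 (i.e., the associated renewal process is transient), and for each truncation level tr ∈ ℕ let K₂^{tr} be a probability distribution on {1,…,tr} agreeing with K₂ on {1,…,tr−1}. Let f₂^{tr}(λ) > 0 solve e^{−λ} = Σ_{n=1}^{tr} K₂^{tr}(n) e^{−n f₂^{tr}(λ)}. Then for every λ with 0 < λ < λ₀, sup_{tr∈ℕ} tr · f₂^{tr}(λ) < ∞; in fact tr·f₂^{tr}(λ) ≤ log[(1 − L₂(tr−1))/(e^{−λ} − L₂(tr−1))]. -/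

import Mathlib

open MeasureTheory Filter Real Set
open scoped ENNReal NNReal Topology

/-- Let `K₂` be a sub-probability distribution on `ℕ` with total mass
`e^{−λ₀} < 1`, and for each truncation level `tr` let `K₂^{tr}` be the probability
distribution on `{1,…,tr}` agreeing with `K₂` on `{1,…,tr−1}`. Let `f₂^{tr}(λ) > 0` solve
`e^{−λ} = Σ_{n=1}^{tr} K₂^{tr}(n) e^{−n f₂^{tr}(λ)}`. Then for `0 < λ < λ₀`,
`tr·f₂^{tr}(λ) ≤ log[(1 − L₂(tr−1))/(e^{−λ} − L₂(tr−1))]` and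
`sup_{tr} tr·f₂^{tr}(λ) < ∞`. -/
theorem stmt7 (K₂ : ℕ → ℝ) (h0 : K₂ 0 = 0) (hpos : ∀ n, 0 ≤ K₂ n)
    (lam₀ : ℝ) (hlam₀ : 0 < lam₀) (hmass : ∑' n, K₂ n = Real.exp (-lam₀))
    (K₂tr : ℕ → ℕ → ℝ)
    (htr_agree : ∀ tr n, 1 ≤ n → n < tr → K₂tr tr n = K₂ n)
    (htr_nonneg : ∀ tr n, 0 ≤ K₂tr tr n)
    (htr_supp : ∀ tr n, n = 0 ∨ tr < n → K₂tr tr n = 0)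
    (htr_prob : ∀ tr, 1 ≤ tr → ∑ n ∈ Finset.Icc 1 tr, K₂tr tr n = 1)
    (lam : ℝ) (hlam : 0 < lam) (hlamlt : lam < lam₀)
    (f₂ : ℕ → ℝ) (hf₂pos : ∀ tr, 0 < f₂ tr)
    (hf₂ : ∀ tr, 1 ≤ tr →
      Real.exp (-lam) = ∑ n ∈ Finset.Icc 1 tr, K₂tr tr n * Real.exp (-(n : ℝ) * f₂ tr)) :
    (∀ tr : ℕ, 1 ≤ tr → (tr : ℝ) * f₂ tr ≤
      Real.log ((1 - ∑ k ∈ Finset.Icc 1 (tr - 1), K₂ k) /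
        (Real.exp (-lam) - ∑ k ∈ Finset.Icc 1 (tr - 1), K₂ k)))
    ∧ ∃ C : ℝ, ∀ tr : ℕ, (tr : ℝ) * f₂ tr ≤ C := by
  have hsumm : Summable K₂ := by
    by_contra h
    rw [tsum_eq_zero_of_not_summable h] at hmass
    exact (Real.exp_pos (-lam₀)).ne' hmass.symm
  have hSle : ∀ m : ℕ, ∑ k ∈ Finset.Icc 1 m, K₂ k ≤ Real.exp (-lam₀) := by
    intro m
    rw [← hmass]
    exact Summable.sum_le_tsum _ (fun n _ => hpos n) hsumm
  have hSnn : ∀ m : ℕ, 0 ≤ ∑ k ∈ Finset.Icc 1 m, K₂ k :=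
    fun m => Finset.sum_nonneg fun n _ => hpos n
  have hexplt : Real.exp (-lam₀) < Real.exp (-lam) := Real.exp_lt_exp.mpr (by linarith)
  have hexp1 : Real.exp (-lam) < 1 := by
    rw [Real.exp_lt_one_iff]; linarith
  have hmain : ∀ tr : ℕ, 1 ≤ tr → (tr : ℝ) * f₂ tr ≤
      Real.log ((1 - ∑ k ∈ Finset.Icc 1 (tr - 1), K₂ k) /
        (Real.exp (-lam) - ∑ k ∈ Finset.Icc 1 (tr - 1), K₂ k)) := by
    intro tr htr
    obtain ⟨m, rfl⟩ : ∃ m, tr = m + 1 := ⟨tr - 1, (Nat.succ_pred_eq_of_pos htr).symm⟩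
    have hm1 : (m + 1) - 1 = m := rfl
    rw [hm1]
    set S := ∑ k ∈ Finset.Icc 1 m, K₂ k with hSdef
    have hSltE : S < Real.exp (-lam) := lt_of_le_of_lt (hSle m) hexplt
    have hS1 : S < 1 := lt_trans hSltE hexp1
    have hle1 : (1:ℕ) ≤ m + 1 := Nat.le_add_left 1 m
    have heq := hf₂ (m+1) hle1
    rw [Finset.sum_Icc_succ_top hle1] at heq
    have hprob := htr_prob (m+1) hle1
    rw [Finset.sum_Icc_succ_top hle1] at hprob
    have hagree : ∀ n ∈ Finset.Icc 1 m, K₂tr (m+1) n = K₂ n := by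
      intro n hn
      simp only [Finset.mem_Icc] at hn
      exact htr_agree _ n hn.1 (Nat.lt_succ_of_le hn.2)
    have hsum_eq : ∑ n ∈ Finset.Icc 1 m, K₂tr (m+1) n = S :=
      Finset.sum_congr rfl hagree
    have htop : K₂tr (m+1) (m+1) = 1 - S := by rw [hsum_eq] at hprob; linarith
    have hterm : ∑ n ∈ Finset.Icc 1 m, K₂tr (m+1) n * Real.exp (-(n:ℝ) * f₂ (m+1)) ≤ S := by
      rw [hSdef]
      apply Finset.sum_le_sum
      intro n hn
      rw [hagree n hn]
      have hnf : (0:ℝ) ≤ (n:ℝ) * f₂ (m+1) :=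
        mul_nonneg (Nat.cast_nonneg n) (hf₂pos (m+1)).le
      have : Real.exp (-(n:ℝ) * f₂ (m+1)) ≤ 1 := by
        rw [Real.exp_le_one_iff]; nlinarith
      exact mul_le_of_le_one_right (hpos n) this
    have hkey : Real.exp (-lam) - S ≤
        (1 - S) * Real.exp (-((m+1:ℕ):ℝ) * f₂ (m+1)) := by
      rw [htop] at heq; linarith
    have hEpos : (0:ℝ) < Real.exp (((m+1:ℕ):ℝ) * f₂ (m+1)) := Real.exp_pos _
    have hEinv : Real.exp (-((m+1:ℕ):ℝ) * f₂ (m+1)) =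
        (Real.exp (((m+1:ℕ):ℝ) * f₂ (m+1)))⁻¹ := by
      rw [← Real.exp_neg]; ring_nf
    have hEmul : Real.exp (-((m+1:ℕ):ℝ) * f₂ (m+1)) *
        Real.exp (((m+1:ℕ):ℝ) * f₂ (m+1)) = 1 := by
      rw [hEinv, inv_mul_cancel₀ hEpos.ne']
    have hdivpos : (0:ℝ) < (1 - S) / (Real.exp (-lam) - S) :=
      div_pos (by linarith) (by linarith)
    rw [Real.le_log_iff_exp_le hdivpos, le_div_iff₀ (by linarith : (0:ℝ) < Real.exp (-lam) - S)]
    nlinarith [hkey, hEpos, hEmul]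
  refine ⟨hmain, ⟨Real.log (1 / (Real.exp (-lam) - Real.exp (-lam₀))), ?_⟩⟩
  intro tr
  have hcpos : (0:ℝ) < Real.exp (-lam) - Real.exp (-lam₀) := by linarith
  have hc1 : Real.exp (-lam) - Real.exp (-lam₀) ≤ 1 := by
    have := (Real.exp_pos (-lam₀)); linarith
  have hClog : (0:ℝ) ≤ Real.log (1 / (Real.exp (-lam) - Real.exp (-lam₀))) :=
    Real.log_nonneg (by rw [le_div_iff₀ hcpos]; linarith)
  rcases Nat.eq_zero_or_pos tr with h0' | h1'
  · subst h0'; simpa using hClog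
  · refine le_trans (hmain tr h1') ?_
    set S := ∑ k ∈ Finset.Icc 1 (tr-1), K₂ k with hSdef
    have hSle' : S ≤ Real.exp (-lam₀) := hSle _
    have hSnn' : 0 ≤ S := hSnn _
    have hSltE : S < Real.exp (-lam) := lt_of_le_of_lt hSle' hexplt
    have hdiv : (1 - S) / (Real.exp (-lam) - S) ≤
        1 / (Real.exp (-lam) - Real.exp (-lam₀)) :=
      div_le_div₀ zero_le_one (by linarith) hcpos (by linarith)
    have hpos' : (0:ℝ) < (1 - S) / (Real.exp (-lam) - S) :=
      div_pos (by nlinarith [Real.exp_pos (-lam₀), hexp1]) (by linarith)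
    exact Real.log_le_log hpos' hdiv
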